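/- arXiv:1404.4020 — 6 statements merged into one kernel-verified Lean document; each statement's English description precedes it below -/
import Mathlib

section
/- Let κ ≥ 3 be an integer, a, b, c ∈ ℂ, and let g, r ∈ Fin κ be distinct colors. Define h : Fin κ → Fin κ → Fin κ → ℂ by h(u,v,w) = a if u = v = w, h(u,v,w) = c if u, v, w are pairwise distinct, and h(u,v,w) = b otherwise. Then Σ_{i,j ∈ Fin κ} h(g,i,j)·h(i,j,r) = 2ab + κb² + 4(κ-2)bc + (κ-2)(κ-3)c². -/
lemma aux2 {κ : ℕ} (hκ : 2 ≤ κ) (x y : Fin κ) (hxy : x ≠ y) (f : Fin κ → ℂ) (C : ℂ)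
    (hf : ∀ j, j ≠ x → j ≠ y → f j = C) :
    ∑ j : Fin κ, f j = f x + f y + ((κ : ℂ) - 2) * C := by
  have hsub : ({x, y} : Finset (Fin κ)) ⊆ Finset.univ := Finset.subset_univ _
  rw [← Finset.sum_add_sum_compl ({x, y} : Finset (Fin κ)) f]
  have h1 : ∑ j ∈ ({x, y} : Finset (Fin κ)), f j = f x + f y := Finset.sum_pair hxy
  have h2 : ∑ j ∈ ({x, y} : Finset (Fin κ))ᶜ, f j = ((κ : ℂ) - 2) * C := by
    rw [Finset.sum_congr rfl (fun j hj => ?_), Finset.sum_const, nsmul_eq_mul]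
    · congr 1
      rw [Finset.card_compl, Finset.card_pair hxy, Fintype.card_fin]
      push_cast [Nat.cast_sub hκ]
      ring
    · simp only [Finset.mem_compl, Finset.mem_insert, Finset.mem_singleton, not_or] at hj
      exact hf j hj.1 hj.2
  rw [h1, h2]

lemma aux3 {κ : ℕ} (hκ : 3 ≤ κ) (x y z : Fin κ) (hxy : x ≠ y) (hxz : x ≠ z) (hyz : y ≠ z)
    (f : Fin κ → ℂ) (C : ℂ)
    (hf : ∀ j, j ≠ x → j ≠ y → j ≠ z → f j = C) :
    ∑ j : Fin κ, f j = f x + f y + f z + ((κ : ℂ) - 3) * C := by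
  rw [← Finset.sum_add_sum_compl ({x, y, z} : Finset (Fin κ)) f]
  have h1 : ∑ j ∈ ({x, y, z} : Finset (Fin κ)), f j = f x + f y + f z := by
    rw [Finset.sum_insert (by simp [hxy, hxz]), Finset.sum_pair hyz, add_assoc]
  have h2 : ∑ j ∈ ({x, y, z} : Finset (Fin κ))ᶜ, f j = ((κ : ℂ) - 3) * C := by
    rw [Finset.sum_congr rfl (fun j hj => ?_), Finset.sum_const, nsmul_eq_mul]
    · congr 1
      have hcard : ({x, y, z} : Finset (Fin κ)).card = 3 := by
        rw [Finset.card_insert_of_notMem (by simp [hxy, hxz]), Finset.card_pair hyz]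
      rw [Finset.card_compl, hcard, Fintype.card_fin]
      push_cast [Nat.cast_sub hκ]
      ring
    · simp only [Finset.mem_compl, Finset.mem_insert, Finset.mem_singleton, not_or] at hj
      exact hf j hj.1 hj.2.1 hj.2.2
  rw [h1, h2]

theorem stmt_4 (κ : ℕ) (hκ : 3 ≤ κ) (a b c : ℂ) (g r : Fin κ) (hgr : g ≠ r)
    (h : Fin κ → Fin κ → Fin κ → ℂ)
    (hh : ∀ u v w, h u v w =
      if u = v ∧ v = w then a
      else if u ≠ v ∧ v ≠ w ∧ u ≠ w then c
      else b) :
    ∑ i : Fin κ, ∑ j : Fin κ, h g i j * h i j r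
      = 2 * a * b + (κ : ℂ) * b ^ 2 + 4 * ((κ : ℂ) - 2) * b * c
        + ((κ : ℂ) - 2) * ((κ : ℂ) - 3) * c ^ 2 := by
  have hκ2 : 2 ≤ κ := by omega
  have key : ∀ i, i ≠ g → i ≠ r →
      ∑ j : Fin κ, h g i j * h i j r = b * c + c * b + b * b + ((κ : ℂ) - 3) * (c * c) := by
    intro i hig hir
    rw [aux3 hκ g r i hgr hig.symm hir.symm _ (c * c)
      (fun j hjg hjr hji => by simp [hh, hgr, hig, hig.symm, hir, hir.symm, hjg, hjg.symm,
        hjr, hjr.symm, hji, hji.symm])]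
    simp [hh, hgr, hgr.symm, hig, hig.symm, hir, hir.symm]
  rw [aux2 hκ2 g r hgr _ (b * c + c * b + b * b + ((κ : ℂ) - 3) * (c * c))
    (fun i hig hir => key i hig hir)]
  rw [aux2 hκ2 g r hgr (fun j => h g g j * h g j r) (b * c)
    (fun j hjg hjr => by simp [hh, hgr, hgr.symm, hjg, hjg.symm, hjr, hjr.symm])]
  rw [aux2 hκ2 g r hgr (fun j => h g r j * h r j r) (c * b)
    (fun j hjg hjr => by simp [hh, hgr, hgr.symm, hjg, hjg.symm, hjr, hjr.symm])]
  simp only [hh]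
  simp [hgr, hgr.symm]
  ring
end

section
/- Let κ ≥ 3 be an integer and a, b, c ∈ ℂ. With h the symmetric ternary signature on Fin κ (a if all three arguments equal, c if pairwise distinct, b otherwise), for any color g ∈ Fin κ: Σ_{i,j,k ∈ Fin κ} h(g,i,j)·h(j,k,g)·h(i,g,k) — equivalently the triangle gadget with all three external edges assigned g — equals a³ + 3(κ-1)ab² + 4(κ-1)b³ + 3(κ-1)(κ-2)(b²c + bc²) + (κ-1)(κ-2)(κ-3)c³. -/
open Finset in
lemma sum_split_aux (κ : ℕ) (s : Finset (Fin κ)) (f : Fin κ → ℂ) (C : ℂ)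
    (hf : ∀ k ∉ s, f k = C) :
    ∑ k, f k = ∑ k ∈ s, f k + ((κ - s.card : ℕ) : ℂ) * C := by
  rw [← Finset.sum_sdiff (Finset.subset_univ s)]
  have h1 : ∑ k ∈ Finset.univ \ s, f k = ((κ - s.card : ℕ) : ℂ) * C := by
    rw [Finset.sum_congr rfl (fun k hk => hf k (Finset.mem_sdiff.mp hk).2),
      Finset.sum_const, Finset.card_sdiff_of_subset (Finset.subset_univ s), Finset.card_univ,
      Fintype.card_fin, nsmul_eq_mul]
  rw [h1]; ring

theorem stmt_8 (κ : ℕ) (hκ : 3 ≤ κ) (a b c : ℂ) (g : Fin κ)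
    (h : Fin κ → Fin κ → Fin κ → ℂ)
    (hh : ∀ u v w, h u v w =
      if u = v ∧ v = w then a
      else if u ≠ v ∧ v ≠ w ∧ u ≠ w then c
      else b) :
    ∑ i : Fin κ, ∑ j : Fin κ, ∑ k : Fin κ, h g i j * h j k g * h i g k
      = a ^ 3 + 3 * ((κ : ℂ) - 1) * a * b ^ 2 + 4 * ((κ : ℂ) - 1) * b ^ 3
        + 3 * ((κ : ℂ) - 1) * ((κ : ℂ) - 2) * (b ^ 2 * c + b * c ^ 2)
        + ((κ : ℂ) - 1) * ((κ : ℂ) - 2) * ((κ : ℂ) - 3) * c ^ 3 := by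
  have hc1 : ((κ - 1 : ℕ) : ℂ) = (κ : ℂ) - 1 := by
    rw [Nat.cast_sub (by omega)]; norm_num
  have hc2 : ((κ - 2 : ℕ) : ℂ) = (κ : ℂ) - 2 := by
    rw [Nat.cast_sub (by omega)]; norm_num
  have hc3 : ((κ - 3 : ℕ) : ℂ) = (κ : ℂ) - 3 := by
    rw [Nat.cast_sub (by omega)]; norm_num
  -- k-sum lemmas
  have SA : ∑ k : Fin κ, h g k g * h g g k = a * a + ((κ : ℂ) - 1) * (b * b) := by
    rw [sum_split_aux κ {g} _ (b * b) ?_]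
    · simp only [Finset.sum_singleton, Finset.card_singleton, hc1, hh]
      simp
    · intro k hk
      simp only [Finset.mem_singleton] at hk
      have hk' : g ≠ k := Ne.symm hk
      simp [hh, hk, hk']
  have SB : ∀ j : Fin κ, j ≠ g →
      ∑ k : Fin κ, h j k g * h g g k = a * b + b * b + ((κ : ℂ) - 2) * (c * b) := by
    intro j hj
    rw [sum_split_aux κ {g, j} _ (c * b) ?_]
    · rw [Finset.sum_insert (by simp [Ne.symm hj]), Finset.sum_singleton]
      have hcard : ({g, j} : Finset (Fin κ)).card = 2 := by
        rw [Finset.card_insert_of_notMem (by simp [Ne.symm hj])]; simp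
      rw [hcard, hc2]
      have hj' : g ≠ j := Ne.symm hj
      simp [hh, hj, hj']
      ring
    · intro k hk
      simp only [Finset.mem_insert, Finset.mem_singleton, not_or] at hk
      obtain ⟨hkg, hkj⟩ := hk
      have h1 : j ≠ k := Ne.symm hkj
      have h2 : g ≠ k := Ne.symm hkg
      simp [hh, hj, h1, h2, hkg, hkj]
  have SC : ∀ i : Fin κ, i ≠ g →
      ∑ k : Fin κ, h g k g * h i g k = a * b + b * b + ((κ : ℂ) - 2) * (b * c) := by
    intro i hi
    rw [sum_split_aux κ {g, i} _ (b * c) ?_]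
    · rw [Finset.sum_insert (by simp [Ne.symm hi]), Finset.sum_singleton]
      have hcard : ({g, i} : Finset (Fin κ)).card = 2 := by
        rw [Finset.card_insert_of_notMem (by simp [Ne.symm hi])]; simp
      rw [hcard, hc2]
      have hi' : g ≠ i := Ne.symm hi
      simp [hh, hi, hi']
    · intro k hk
      simp only [Finset.mem_insert, Finset.mem_singleton, not_or] at hk
      obtain ⟨hkg, hki⟩ := hk
      have h1 : g ≠ k := Ne.symm hkg
      have h2 : i ≠ k := Ne.symm hki
      simp [hh, hi, h1, h2, hkg, hki]
  have SD : ∀ i : Fin κ, i ≠ g →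
      ∑ k : Fin κ, h i k g * h i g k = 2 * (b * b) + ((κ : ℂ) - 2) * (c * c) := by
    intro i hi
    rw [sum_split_aux κ {g, i} _ (c * c) ?_]
    · rw [Finset.sum_insert (by simp [Ne.symm hi]), Finset.sum_singleton]
      have hcard : ({g, i} : Finset (Fin κ)).card = 2 := by
        rw [Finset.card_insert_of_notMem (by simp [Ne.symm hi])]; simp
      rw [hcard, hc2]
      have hi' : g ≠ i := Ne.symm hi
      simp [hh, hi, hi']
      ring
    · intro k hk
      simp only [Finset.mem_insert, Finset.mem_singleton, not_or] at hk
      obtain ⟨hkg, hki⟩ := hk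
      have h1 : i ≠ k := Ne.symm hki
      have h2 : g ≠ k := Ne.symm hkg
      simp [hh, hi, h1, h2, hkg, hki]
  have SE : ∀ i j : Fin κ, i ≠ g → j ≠ g → i ≠ j →
      ∑ k : Fin κ, h j k g * h i g k
        = b * b + 2 * (b * c) + ((κ : ℂ) - 3) * (c * c) := by
    intro i j hi hj hij
    rw [sum_split_aux κ {g, i, j} _ (c * c) ?_]
    · have hgi : g ∉ ({i, j} : Finset (Fin κ)) := by simp [Ne.symm hi, Ne.symm hj]
      have hij' : i ∉ ({j} : Finset (Fin κ)) := by simp [hij]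
      rw [Finset.sum_insert hgi, Finset.sum_insert hij', Finset.sum_singleton]
      have hcard : ({g, i, j} : Finset (Fin κ)).card = 3 := by
        rw [Finset.card_insert_of_notMem hgi, Finset.card_insert_of_notMem hij']; simp
      rw [hcard, hc3]
      have h1 : g ≠ i := Ne.symm hi
      have h2 : g ≠ j := Ne.symm hj
      have h3 : j ≠ i := Ne.symm hij
      simp [hh, hi, hj, hij, h1, h2, h3]
      ring
    · intro k hk
      simp only [Finset.mem_insert, Finset.mem_singleton, not_or] at hk
      obtain ⟨hkg, hki, hkj⟩ := hk
      have h1 : j ≠ k := Ne.symm hkj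
      have h2 : i ≠ k := Ne.symm hki
      have h3 : g ≠ k := Ne.symm hkg
      simp [hh, hi, hj, hij, h1, h2, h3, hkg, hki, hkj]
  -- factor out h g i j from the k-sum
  have hfac : ∀ i j : Fin κ,
      ∑ k : Fin κ, h g i j * h j k g * h i g k
        = h g i j * ∑ k : Fin κ, h j k g * h i g k := by
    intro i j
    rw [Finset.mul_sum]
    exact Finset.sum_congr rfl fun k _ => by ring
  -- j-sums
  have Ag : ∑ j : Fin κ, ∑ k : Fin κ, h g g j * h j k g * h g g k
      = a * (a * a + ((κ : ℂ) - 1) * (b * b))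
        + ((κ : ℂ) - 1) * (b * (a * b + b * b + ((κ : ℂ) - 2) * (c * b))) := by
    have : ∀ j : Fin κ, ∑ k : Fin κ, h g g j * h j k g * h g g k
        = h g g j * ∑ k : Fin κ, h j k g * h g g k := fun j => hfac g j
    simp only [this]
    rw [sum_split_aux κ {g} _ (b * (a * b + b * b + ((κ : ℂ) - 2) * (c * b))) ?_]
    · rw [Finset.sum_singleton, Finset.card_singleton, hc1, SA]
      have hggg : h g g g = a := by simp [hh]
      rw [hggg]
    · intro j hj
      simp only [Finset.mem_singleton] at hj
      have hggj : h g g j = b := by simp [hh, Ne.symm hj]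
      rw [hggj, SB j hj]
  have Ai : ∀ i : Fin κ, i ≠ g →
      ∑ j : Fin κ, ∑ k : Fin κ, h g i j * h j k g * h i g k
      = b * (a * b + b * b + ((κ : ℂ) - 2) * (b * c))
        + b * (2 * (b * b) + ((κ : ℂ) - 2) * (c * c))
        + ((κ : ℂ) - 2) * (c * (b * b + 2 * (b * c) + ((κ : ℂ) - 3) * (c * c))) := by
    intro i hi
    simp only [hfac]
    rw [sum_split_aux κ {g, i} _
      (c * (b * b + 2 * (b * c) + ((κ : ℂ) - 3) * (c * c))) ?_]
    · rw [Finset.sum_insert (by simp [Ne.symm hi]), Finset.sum_singleton]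
      have hcard : ({g, i} : Finset (Fin κ)).card = 2 := by
        rw [Finset.card_insert_of_notMem (by simp [Ne.symm hi])]; simp
      rw [hcard, hc2]
      have hgig : h g i g = b := by simp [hh, hi, Ne.symm hi]
      have hgii : h g i i = b := by simp [hh, hi, Ne.symm hi]
      rw [hgig, hgii, SC i hi, SD i hi]
    · intro j hj
      simp only [Finset.mem_insert, Finset.mem_singleton, not_or] at hj
      obtain ⟨hjg, hji⟩ := hj
      have hgij : h g i j = c := by
        simp [hh, hi, Ne.symm hi, Ne.symm hji, Ne.symm hjg, hji]
      rw [hgij, SE i j hi hjg (Ne.symm hji)]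
  -- outer sum
  rw [sum_split_aux κ {g} _
    (b * (a * b + b * b + ((κ : ℂ) - 2) * (b * c))
      + b * (2 * (b * b) + ((κ : ℂ) - 2) * (c * c))
      + ((κ : ℂ) - 2) * (c * (b * b + 2 * (b * c) + ((κ : ℂ) - 3) * (c * c))))
    (fun i hi => Ai i (by simpa using hi))]
  rw [Finset.sum_singleton, Finset.card_singleton, hc1, Ag]
  ring
end

section
/- Let κ ≥ 3 be an integer and a, b, c ∈ ℂ with a - 3b + 2c = 0. Define a' = a³ + 3(κ-1)ab² + 4(κ-1)b³ + 3(κ-1)(κ-2)(b²c + bc²) + (κ-1)(κ-2)(κ-3)c³, b' = a²b + 4ab² + 2(κ-2)abc + (κ-2)ac² + (5κ-7)b³ + (κ-2)(κ+5)b²c + (κ-2)(7κ-18)bc² + (κ-2)(κ-3)²c³, and c' = 3ab² + 6abc + 3(κ-3)ac² + (κ+5)b³ + 3(7κ-18)b²c + 9(κ-3)²bc² + (κ³-9κ²+29κ-32)c³. Then a' = 3b' - 2c'. -/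
theorem stmt_9 (κ : ℕ) (hκ : 3 ≤ κ) (a b c : ℂ) (hA : a - 3 * b + 2 * c = 0)
    (a' b' c' : ℂ)
    (ha' : a' = a ^ 3 + 3 * ((κ : ℂ) - 1) * a * b ^ 2 + 4 * ((κ : ℂ) - 1) * b ^ 3
      + 3 * ((κ : ℂ) - 1) * ((κ : ℂ) - 2) * (b ^ 2 * c + b * c ^ 2)
      + ((κ : ℂ) - 1) * ((κ : ℂ) - 2) * ((κ : ℂ) - 3) * c ^ 3)
    (hb' : b' = a ^ 2 * b + 4 * a * b ^ 2 + 2 * ((κ : ℂ) - 2) * a * b * c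
      + ((κ : ℂ) - 2) * a * c ^ 2 + (5 * (κ : ℂ) - 7) * b ^ 3
      + ((κ : ℂ) - 2) * ((κ : ℂ) + 5) * b ^ 2 * c
      + ((κ : ℂ) - 2) * (7 * (κ : ℂ) - 18) * b * c ^ 2
      + ((κ : ℂ) - 2) * ((κ : ℂ) - 3) ^ 2 * c ^ 3)
    (hc' : c' = 3 * a * b ^ 2 + 6 * a * b * c + 3 * ((κ : ℂ) - 3) * a * c ^ 2
      + ((κ : ℂ) + 5) * b ^ 3 + 3 * (7 * (κ : ℂ) - 18) * b ^ 2 * c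
      + 9 * ((κ : ℂ) - 3) ^ 2 * b * c ^ 2
      + ((κ : ℂ) ^ 3 - 9 * (κ : ℂ) ^ 2 + 29 * (κ : ℂ) - 32) * c ^ 3) :
    a' = 3 * b' - 2 * c' := by
  have ha : a = 3 * b - 2 * c := by linear_combination hA
  subst ha ha' hb' hc'
  ring
end

section
/- Let κ ≥ 3 be an integer and a, b, c, x, y ∈ ℂ with a = 3b - 2c. Then the quantity b' = a(x²y + xy² + (κ-2)y³) + b(x³ + κx²y + (7κ-12)xy² + (3κ²-11κ+11)y³) + c(κ-2)(2x²y + (3κ-7)xy² + (κ²-4κ+5)y³) factors as b' = (x + (κ-1)y)·(bx² + 2(2b + (κ-3)c)xy + ((3κ-5)b + (κ²-5κ+6)c)y²). -/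
theorem stmt_14 (κ : ℕ) (hκ : 3 ≤ κ) (a b c x y : ℂ) (hA : a = 3 * b - 2 * c) :
    a * (x ^ 2 * y + x * y ^ 2 + ((κ : ℂ) - 2) * y ^ 3)
      + b * (x ^ 3 + (κ : ℂ) * x ^ 2 * y + (7 * (κ : ℂ) - 12) * x * y ^ 2
        + (3 * (κ : ℂ) ^ 2 - 11 * (κ : ℂ) + 11) * y ^ 3)
      + c * ((κ : ℂ) - 2) * (2 * x ^ 2 * y + (3 * (κ : ℂ) - 7) * x * y ^ 2
        + ((κ : ℂ) ^ 2 - 4 * (κ : ℂ) + 5) * y ^ 3)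
    = (x + ((κ : ℂ) - 1) * y)
      * (b * x ^ 2 + 2 * (2 * b + ((κ : ℂ) - 3) * c) * x * y
        + ((3 * (κ : ℂ) - 5) * b + ((κ : ℂ) ^ 2 - 5 * (κ : ℂ) + 6) * c) * y ^ 2) := by
  subst hA; ring
end

section
/- Let κ ≥ 3 be an integer and a, b, c, x, y ∈ ℂ with a = 3b - 2c. Then the quantity c' = a(3xy² + (κ-3)y³) + 3b(2x²y + (3κ-7)xy² + (κ²-4κ+5)y³) + c(x³ + 3(κ-3)x²y + 3(κ²-5κ+7)xy² + (κ³-6κ²+14κ-13)y³) factors as c' = (x + (κ-1)y)·(cx² + 2(3b + (κ-4)c)xy + ((3κ-6)b + (κ²-5κ+7)c)y²). -/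
theorem stmt_15 (κ : ℕ) (hκ : 3 ≤ κ) (a b c x y : ℂ) (hA : a = 3 * b - 2 * c) :
    a * (3 * x * y ^ 2 + ((κ : ℂ) - 3) * y ^ 3)
      + 3 * b * (2 * x ^ 2 * y + (3 * (κ : ℂ) - 7) * x * y ^ 2
        + ((κ : ℂ) ^ 2 - 4 * (κ : ℂ) + 5) * y ^ 3)
      + c * (x ^ 3 + 3 * ((κ : ℂ) - 3) * x ^ 2 * y
        + 3 * ((κ : ℂ) ^ 2 - 5 * (κ : ℂ) + 7) * x * y ^ 2
        + ((κ : ℂ) ^ 3 - 6 * (κ : ℂ) ^ 2 + 14 * (κ : ℂ) - 13) * y ^ 3)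
    = (x + ((κ : ℂ) - 1) * y)
      * (c * x ^ 2 + 2 * (3 * b + ((κ : ℂ) - 4) * c) * x * y
        + ((3 * (κ : ℂ) - 6) * b + ((κ : ℂ) ^ 2 - 5 * (κ : ℂ) + 7) * c) * y ^ 2) := by
  subst hA; ring
end

section
/- Let κ ≥ 3 be an integer and a, b, c ∈ ℂ, and let t₁ ≠ t₂ in Fin κ. With M(t) the matrix defined by M(t)_{i,j} = a if i = j = t; b if i = j ≠ t or (i ≠ j and (i = t or j = t)); c otherwise, we have tr(M(t₁)·M(t₂)) = 2ab + κb² + 4(κ-2)bc + (κ-2)(κ-3)c². -/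
theorem stmt_19 (κ : ℕ) (hκ : 3 ≤ κ) (a b c : ℂ) (t₁ t₂ : Fin κ) (ht : t₁ ≠ t₂)
    (M : Fin κ → Matrix (Fin κ) (Fin κ) ℂ)
    (hM : ∀ t i j, M t i j =
      if i = j ∧ j = t then a
      else if i = j ∨ (i = t ∨ j = t) then b
      else c) :
    Matrix.trace (M t₁ * M t₂)
      = 2 * a * b + (κ : ℂ) * b ^ 2 + 4 * ((κ : ℂ) - 2) * b * c
        + ((κ : ℂ) - 2) * ((κ : ℂ) - 3) * c ^ 2 := by
  classical
  set s : Finset (Fin κ) := Finset.univ \ {t₁, t₂} with hs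
  have ht₁s : t₁ ∉ s := by simp [hs]
  have ht₂s : t₂ ∉ s := by simp [hs]
  have hmem : ∀ x ∈ s, x ≠ t₁ ∧ x ≠ t₂ := by
    intro x hx
    simp [hs] at hx
    exact hx
  have hpair : ({t₁, t₂} : Finset (Fin κ)).card = 2 := by
    rw [Finset.card_insert_of_notMem (by simp [ht]), Finset.card_singleton]
  have hscard : s.card = κ - 2 := by
    rw [hs, Finset.card_sdiff_of_subset (Finset.subset_univ _), hpair, Finset.card_univ,
      Fintype.card_fin]
  have hcast : ((s.card : ℕ) : ℂ) = (κ : ℂ) - 2 := by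
    rw [hscard, Nat.cast_sub (by omega)]; norm_num
  have huniv : (Finset.univ : Finset (Fin κ)) = insert t₁ (insert t₂ s) := by
    ext x
    by_cases h1 : x = t₁ <;> by_cases h2 : x = t₂ <;> simp [hs, h1, h2]
  have ht₁ins : t₁ ∉ insert t₂ s := by simp [ht, ht₁s]
  -- entry lemmas
  have e11 : M t₁ t₁ t₁ = a := by rw [hM]; simp
  have e22 : M t₂ t₂ t₂ = a := by rw [hM]; simp
  have e1d2 : M t₁ t₂ t₂ = b := by rw [hM]; simp [ht.symm]
  have e2d1 : M t₂ t₁ t₁ = b := by rw [hM]; simp [ht]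
  have e1off : ∀ i j : Fin κ, i ≠ j → (i = t₁ ∨ j = t₁) → M t₁ i j = b := by
    intro i j hij h
    rw [hM]
    rcases h with rfl | rfl <;> simp [hij]
  have e2off : ∀ i j : Fin κ, i ≠ j → (i = t₂ ∨ j = t₂) → M t₂ i j = b := by
    intro i j hij h
    rw [hM]
    rcases h with rfl | rfl <;> simp [hij]
  have e1s : ∀ i j : Fin κ, i ≠ t₁ → j ≠ t₁ →
      M t₁ i j = if i = j then b else c := by
    intro i j hi hj
    rw [hM]
    by_cases h : i = j <;> simp [h, hi, hj]
  have e2s : ∀ i j : Fin κ, i ≠ t₂ → j ≠ t₂ →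
      M t₂ i j = if i = j then b else c := by
    intro i j hi hj
    rw [hM]
    by_cases h : i = j <;> simp [h, hi, hj]
  -- express the trace as a double sum
  have htr : Matrix.trace (M t₁ * M t₂)
      = ∑ i, ∑ j, M t₁ i j * M t₂ j i := by
    simp [Matrix.trace, Matrix.diag, Matrix.mul_apply]
  rw [htr]
  -- inner sums
  have row1 : (∑ j, M t₁ t₁ j * M t₂ j t₁)
      = a * b + b * b + ((κ : ℂ) - 2) * (b * c) := by
    rw [huniv, Finset.sum_insert ht₁ins, Finset.sum_insert ht₂s]
    have h1 : M t₁ t₁ t₂ * M t₂ t₂ t₁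
        = b * b := by
      rw [e1off t₁ t₂ ht (Or.inl rfl), e2off t₂ t₁ ht.symm (Or.inl rfl)]
    have h2 : ∀ j ∈ s, M t₁ t₁ j * M t₂ j t₁ = b * c := by
      intro j hj
      obtain ⟨hj1, hj2⟩ := hmem j hj
      rw [e1off t₁ j (Ne.symm hj1) (Or.inl rfl),
        e2s j t₁ hj2 ht, if_neg hj1]
    rw [e11, e2d1, h1, Finset.sum_congr rfl h2, Finset.sum_const, hscard,
      nsmul_eq_mul, Nat.cast_sub (by omega)]
    push_cast
    ring
  have row2 : (∑ j, M t₁ t₂ j * M t₂ j t₂)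
      = b * b + b * a + ((κ : ℂ) - 2) * (b * c) := by
    rw [huniv, Finset.sum_insert ht₁ins, Finset.sum_insert ht₂s]
    have h0 : M t₁ t₂ t₁ * M t₂ t₁ t₂ = b * b := by
      rw [e1off t₂ t₁ ht.symm (Or.inr rfl), e2off t₁ t₂ ht (Or.inr rfl)]
    have h2 : ∀ j ∈ s, M t₁ t₂ j * M t₂ j t₂ = c * b := by
      intro j hj
      obtain ⟨hj1, hj2⟩ := hmem j hj
      rw [e1s t₂ j ht.symm hj1, if_neg (fun h => hj2 h.symm),
        e2off j t₂ hj2 (Or.inr rfl)]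
    rw [e1d2, e22, h0, Finset.sum_congr rfl h2, Finset.sum_const, hscard,
      nsmul_eq_mul, Nat.cast_sub (by omega)]
    push_cast
    ring
  have rows : ∀ i ∈ s, (∑ j, M t₁ i j * M t₂ j i)
      = b * c + c * b + (b ^ 2 + ((κ : ℂ) - 3) * c ^ 2) := by
    intro i hi
    obtain ⟨hi1, hi2⟩ := hmem i hi
    rw [huniv, Finset.sum_insert ht₁ins, Finset.sum_insert ht₂s]
    have h1 : M t₁ i t₁ * M t₂ t₁ i = b * c := by
      rw [e1off i t₁ hi1 (Or.inr rfl), e2s t₁ i ht hi2, if_neg (Ne.symm hi1)]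
    have h2 : M t₁ i t₂ * M t₂ t₂ i = c * b := by
      rw [e1s i t₂ hi1 (fun h => ht h.symm), if_neg hi2,
        e2off t₂ i (Ne.symm hi2) (Or.inl rfl)]
    have h3 : (∑ j ∈ s, M t₁ i j * M t₂ j i)
        = b ^ 2 + ((κ : ℂ) - 3) * c ^ 2 := by
      have hval : ∀ j ∈ s, M t₁ i j * M t₂ j i
          = if i = j then b ^ 2 else c ^ 2 := by
        intro j hj
        obtain ⟨hj1, hj2⟩ := hmem j hj
        rw [e1s i j hi1 hj1, e2s j i hj2 hi2]
        by_cases h : i = j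
        · subst h; simp [sq]
        · rw [if_neg h, if_neg (fun hh : j = i => h hh.symm), if_neg h]
          ring
      rw [Finset.sum_congr rfl hval, ← Finset.add_sum_erase s _ hi, if_pos rfl]
      have h4 : ∀ j ∈ s.erase i, (if i = j then b ^ 2 else c ^ 2) = c ^ 2 := by
        intro j hj
        rw [if_neg (fun h => (Finset.mem_erase.mp hj).1 h.symm)]
      rw [Finset.sum_congr rfl h4, Finset.sum_const, Finset.card_erase_of_mem hi,
        hscard, nsmul_eq_mul]
      have : κ - 2 - 1 = κ - 3 := by omega
      rw [this, Nat.cast_sub (by omega)]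
      push_cast
      ring
    rw [h1, h2, h3]
    ring
  rw [huniv, Finset.sum_insert ht₁ins, Finset.sum_insert ht₂s, ← huniv, row1, row2,
    Finset.sum_congr rfl rows, Finset.sum_const, hscard, nsmul_eq_mul,
    Nat.cast_sub (by omega)]
  push_cast
  ring
end
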